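/- Let n ≥ 1 be an integer, let 1 < p < ∞, and let δ ≥ 0. For every smooth function u : ℝⁿ → ℝ whose support is a compact subset of the open upper half-space ℝ^{n−1} × (0,∞), one has ∫_{ℝ^{n−1}×(0,∞)} y^{−(δ+1)p} |u(x,y)|^p dx dy ≤ (p/((δ+1)p−1))^p · ∫_{ℝ^{n−1}×(0,∞)} y^{−δp} |∂_y u(x,y)|^p dx dy, where ∂_y u denotes the partial derivative of u in the last coordinate. (Note (δ+1)p − 1 ≥ p − 1 > 0, so the constant is finite; in particular the left-hand side is finite whenever the right-hand side is.) -/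

import Mathlib

open MeasureTheory Set Filter

private lemma cont_rpow_mul {X : Type*} [TopologicalSpace X] {π : X → ℝ} (hπ : Continuous π)
    {w : X → ℝ} (hw : Continuous w) {S : Set X} (hS : IsClosed S)
    (hsw : Function.support w ⊆ S) (hpos : ∀ z ∈ S, 0 < π z) (e : ℝ) :
    Continuous fun z => π z ^ e * w z := by
  rw [continuous_iff_continuousAt]
  intro z
  by_cases hz : z ∈ S
  · exact ((Real.continuousAt_rpow_const (π z) e (Or.inl (hpos z hz).ne')).comp
      hπ.continuousAt).mul hw.continuousAt
  · have hne : ∀ᶠ z' in nhds z, z' ∉ S := hS.isOpen_compl.eventually_mem hz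
    have heq : (fun _ : X => (0:ℝ)) =ᶠ[nhds z] fun z' => π z' ^ e * w z' := by
      filter_upwards [hne] with z' hz'
      have hw0 : w z' = 0 := by
        by_contra h
        exact hz' (hsw (Function.mem_support.mpr h))
      simp [hw0]
    exact continuousAt_const.congr heq

private lemma hardy_oneDim (p δ : ℝ) (hp : 1 < p) (hδ : 0 ≤ δ)
    (v : ℝ → ℝ) (hv : ContDiff ℝ (⊤ : ℕ∞) v) (hcs : HasCompactSupport v)
    (hsupp : tsupport v ⊆ Set.Ioi 0) :
    ∫⁻ y in Set.Ioi (0:ℝ), ENNReal.ofReal (y ^ (-((δ + 1) * p)) * |v y| ^ p) ∂volume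
      ≤ ENNReal.ofReal ((p / ((δ + 1) * p - 1)) ^ p) *
        ∫⁻ y in Set.Ioi (0:ℝ), ENNReal.ofReal (y ^ (-(δ * p)) * |deriv v y| ^ p) ∂volume := by
  have hp0 : (0:ℝ) < p := lt_trans one_pos hp
  have hp1 : (0:ℝ) < p - 1 := by linarith
  set α : ℝ := (δ + 1) * p - 1 with hα_def
  have hα : 0 < α := by nlinarith
  set q : ℝ := p / (p - 1) with hq_def
  have hqp : q.HolderConjugate p := ((Real.holderConjugate_iff_eq_conjExponent hp).2 hq_def).symm
  have hpq : p.HolderConjugate q := hqp.symm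
  have hq0 : 0 < q := hqp.pos
  have hdv : Continuous (deriv v) := hv.continuous_deriv (by exact_mod_cast le_top)
  have hvc : Continuous v := hv.continuous
  -- support bookkeeping
  set K : Set ℝ := insert 1 (tsupport v) with hK_def
  have hKc : IsCompact K := hcs.insert 1
  have hKpos : K ⊆ Set.Ioi 0 := by
    intro y hy
    rcases Set.mem_insert_iff.1 hy with h | h
    · simp [h]
    · exact hsupp h
  have hKne : K.Nonempty := ⟨1, Set.mem_insert 1 _⟩
  set c : ℝ := sInf K with hc_def
  set d : ℝ := sSup K with hd_def
  have hcK : c ∈ K := hKc.sInf_mem hKne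
  have hc : 0 < c := hKpos hcK
  have hKsub : K ⊆ Set.Icc c d := fun y hy => ⟨csInf_le hKc.bddBelow hy, le_csSup hKc.bddAbove hy⟩
  have hcd : c ≤ d := (hKsub hcK).2
  set l : ℝ := c / 2 with hl_def
  set r : ℝ := d + 1 with hr_def
  have hl : 0 < l := by positivity
  have hlc : l < c := by rw [hl_def]; linarith
  have hlr : l ≤ r := by rw [hl_def, hr_def]; linarith
  have hpos_uIcc : ∀ y ∈ Set.uIcc l r, 0 < y := by
    intro y hy
    rw [Set.uIcc_of_le hlr] at hy
    exact lt_of_lt_of_le hl hy.1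
  have hts_sub : tsupport v ⊆ Set.Ioo l r := by
    intro y hy
    have h1 := hKsub (Set.mem_insert_of_mem _ hy)
    exact ⟨lt_of_lt_of_le hlc h1.1, lt_of_le_of_lt h1.2 (by rw [hr_def]; linarith)⟩
  have hv0 : ∀ y : ℝ, y ∉ Set.Ioo l r → v y = 0 := fun y hy =>
    image_eq_zero_of_notMem_tsupport fun hm => hy (hts_sub hm)
  have hdv0 : ∀ y : ℝ, y ∉ Set.Ioo l r → deriv v y = 0 := by
    intro y hy
    by_contra h
    exact hy (hts_sub (support_deriv_subset (Function.mem_support.mpr h)))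
  -- continuity / compact support packages
  have pkg : ∀ (e : ℝ) (w : ℝ → ℝ), Continuous w → Function.support w ⊆ tsupport v →
      Continuous (fun y : ℝ => y ^ e * w y) ∧ HasCompactSupport (fun y : ℝ => y ^ e * w y) := by
    intro e w hw hsw
    refine ⟨cont_rpow_mul continuous_id hw (isClosed_tsupport v) hsw (fun z hz => hsupp hz) e, ?_⟩
    have hss : Function.support (fun y : ℝ => y ^ e * w y) ⊆ tsupport v := by
      intro y hy
      apply hsw
      simp only [Function.mem_support] at hy ⊢
      intro h
      apply hy
      rw [h, mul_zero]
    exact IsCompact.of_isClosed_subset hcs (isClosed_tsupport _)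
      (closure_minimal hss (isClosed_tsupport v))
  have hsupp_pow : ∀ (g : ℝ → ℝ) (e : ℝ), e ≠ 0 →
      Function.support (fun y => |g y| ^ e) ⊆ Function.support g := by
    intro g e he y hy
    simp only [Function.mem_support] at hy ⊢
    intro h
    apply hy
    rw [h, abs_zero, Real.zero_rpow he]
  have hswv : Function.support (fun y => |v y| ^ p) ⊆ tsupport v :=
    (hsupp_pow v p hp0.ne').trans (subset_tsupport v)
  have hswv1 : Function.support (fun y => |v y| ^ (p-1)) ⊆ tsupport v :=
    (hsupp_pow v (p-1) hp1.ne').trans (subset_tsupport v)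
  have hswd : Function.support (fun y => |deriv v y| ^ p) ⊆ tsupport v := by
    refine (hsupp_pow (deriv v) p hp0.ne').trans support_deriv_subset
  have hswdv : Function.support (fun y => |deriv v y|) ⊆ tsupport v := by
    intro y hy
    apply support_deriv_subset
    simp only [Function.mem_support] at hy ⊢
    intro h; apply hy; rw [h, abs_zero]
  have hswM : Function.support (fun y => |v y| ^ (p-1) * |deriv v y|) ⊆ tsupport v := by
    intro y hy
    apply hswv1
    simp only [Function.mem_support] at hy ⊢
    intro h; apply hy; rw [h, zero_mul]
  -- nonnegativity a.e. on Ioi 0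
  have hnn : ∀ (e : ℝ) (w : ℝ → ℝ), (∀ y, 0 ≤ w y) →
      (0 ≤ᶠ[ae (volume.restrict (Set.Ioi (0:ℝ)))] fun y => y ^ e * w y) := by
    intro e w hw
    filter_upwards [ae_restrict_mem measurableSet_Ioi] with y hy
    exact mul_nonneg (Real.rpow_nonneg (le_of_lt hy) e) (hw y)
  -- continuity of the nonlinearity derivative
  have hcontDpow : Continuous (fun t : ℝ => p * |t| ^ (p - 2) * t) := by
    have h := (contDiff_norm_rpow (E := ℝ) hp).continuous_deriv le_rfl
    have heqd : deriv (fun t : ℝ => ‖t‖ ^ p) = fun t : ℝ => p * |t| ^ (p - 2) * t := by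
      funext t
      have := (hasDerivAt_norm_rpow t hp).deriv
      simpa [Real.norm_eq_abs] using this
    rwa [heqd] at h
  set G' : ℝ → ℝ := fun y => (p * |v y| ^ (p - 2) * v y) * deriv v y with hG'_def
  have hG'cont : Continuous G' := (hcontDpow.comp hvc).mul hdv
  have hG : ∀ y : ℝ, HasDerivAt (fun t => |v t| ^ p) (G' y) y := by
    intro y
    have h1 := hasDerivAt_abs_rpow (v y) hp
    have h2 := (hv.differentiable (by simp) y).hasDerivAt
    exact h1.comp y h2
  have hF : ∀ y ∈ Set.uIcc l r,
      HasDerivAt (fun t : ℝ => -(t ^ (-α)) / α) (y ^ (-((δ + 1) * p))) y := by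
    intro y hy
    have hy0 : (0:ℝ) < y := hpos_uIcc y hy
    have h1 : HasDerivAt (fun t : ℝ => t ^ (-α)) (-α * y ^ (-α - 1)) y :=
      Real.hasDerivAt_rpow_const (Or.inl hy0.ne')
    have h2 := (h1.neg).div_const α
    have he : -α - 1 = -((δ + 1) * p) := by rw [hα_def]; ring
    have h3 : HasDerivAt (fun t : ℝ => -(t ^ (-α)) / α) (-(-α * y ^ (-α - 1)) / α) y := h2
    convert h3 using 1
    rw [← he]
    field_simp
  -- interval integrabilities
  have hcontF' : ContinuousOn (fun y : ℝ => y ^ (-((δ + 1) * p))) (Set.uIcc l r) := by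
    intro y hy
    exact (Real.continuousAt_rpow_const y _ (Or.inl (hpos_uIcc y hy).ne')).continuousWithinAt
  have hcontF : ContinuousOn (fun y : ℝ => -(y ^ (-α)) / α) (Set.uIcc l r) := by
    intro y hy
    exact (((Real.continuousAt_rpow_const y (-α) (Or.inl (hpos_uIcc y hy).ne')).neg).div_const
      α).continuousWithinAt
  have hi_f1 : IntervalIntegrable (fun y : ℝ => y ^ (-((δ + 1) * p)) * |v y| ^ p) volume l r :=
    (pkg (-((δ + 1) * p)) _ (hvc.abs.rpow_const fun y => Or.inr hp0.le) hswv).1.intervalIntegrable l r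
  have hi_FG' : IntervalIntegrable (fun y : ℝ => (-(y ^ (-α)) / α) * G' y) volume l r :=
    (hcontF.mul hG'cont.continuousOn).intervalIntegrable
  have hi_F' : IntervalIntegrable (fun y : ℝ => y ^ (-((δ + 1) * p))) volume l r :=
    hcontF'.intervalIntegrable
  have hi_G' : IntervalIntegrable G' volume l r := hG'cont.intervalIntegrable l r
  have hMcont : Continuous (fun y : ℝ => y ^ (-α) * (|v y| ^ (p-1) * |deriv v y|)) :=
    (pkg (-α) _ (((hvc.abs.rpow_const fun y => Or.inr hp1.le)).mul hdv.abs) hswM).1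
  have hi_M : IntervalIntegrable (fun y : ℝ => y ^ (-α) * (|v y| ^ (p-1) * |deriv v y|)) volume l r :=
    hMcont.intervalIntegrable l r
  have hi_mid : IntervalIntegrable (fun y : ℝ => (y ^ (-α) * G' y) / α) volume l r := by
    apply ContinuousOn.intervalIntegrable
    intro y hy
    exact (((Real.continuousAt_rpow_const y (-α)
      (Or.inl (hpos_uIcc y hy).ne')).mul hG'cont.continuousAt).div_const α).continuousWithinAt
  -- integration by parts
  have hvl : v l = 0 := hv0 l fun h => lt_irrefl l h.1
  have hvr : v r = 0 := hv0 r fun h => lt_irrefl r h.2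
  have hparts := intervalIntegral.integral_deriv_mul_eq_sub
      (u := fun t : ℝ => -(t ^ (-α)) / α) (v := fun t => |v t| ^ p)
      (u' := fun y : ℝ => y ^ (-((δ + 1) * p))) (v' := G')
      hF (fun y _ => hG y) hi_F' hi_G'
  have habs0 : ∀ {t : ℝ}, v t = 0 → |v t| ^ p = 0 := by
    intro t ht
    rw [ht, abs_zero, Real.zero_rpow hp0.ne']
  simp only [habs0 hvl, habs0 hvr, mul_zero, sub_zero] at hparts
  have hsplit : (∫ y in l..r, y ^ (-((δ + 1) * p)) * |v y| ^ p)
      = ∫ y in l..r, (y ^ (-α) * G' y) / α := by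
    have h1 : (∫ y in l..r, y ^ (-((δ + 1) * p)) * |v y| ^ p)
        + ∫ y in l..r, (-(y ^ (-α)) / α) * G' y = 0 := by
      rw [← intervalIntegral.integral_add hi_f1 hi_FG']
      exact hparts
    have h2 : (∫ y in l..r, (y ^ (-α) * G' y) / α)
        = - ∫ y in l..r, (-(y ^ (-α)) / α) * G' y := by
      rw [← intervalIntegral.integral_neg]
      apply intervalIntegral.integral_congr
      intro y _
      ring
    rw [h2]
    linarith
  -- pointwise bound on the interval
  have hbound : ∀ y ∈ Set.Icc l r, (y ^ (-α) * G' y) / α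
      ≤ (p / α) * (y ^ (-α) * (|v y| ^ (p-1) * |deriv v y|)) := by
    intro y hy
    have hy0 : (0:ℝ) < y := lt_of_lt_of_le hl hy.1
    have hkey : |v y| ^ (p - 2) * v y * deriv v y ≤ |v y| ^ (p - 1) * |deriv v y| := by
      by_cases hvy : v y = 0
      · simp [hvy, abs_zero, Real.zero_rpow (by linarith : p - 1 ≠ 0)]
      · have h1 : |v y| ^ (p - 2) * v y * deriv v y ≤ |(|v y| ^ (p - 2) * v y * deriv v y)| :=
          le_abs_self _
        have h2 : |(|v y| ^ (p - 2) * v y * deriv v y)| = |v y| ^ (p - 1) * |deriv v y| := by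
          rw [abs_mul, abs_mul, abs_of_nonneg (Real.rpow_nonneg (abs_nonneg _) _)]
          have : |v y| ^ (p - 2) * |v y| = |v y| ^ (p - 1) := by
            rw [← Real.rpow_add_one (abs_ne_zero.mpr hvy) (p - 2)]
            ring_nf
          rw [this]
        linarith
    have h1 : G' y ≤ p * (|v y| ^ (p-1) * |deriv v y|) := by
      rw [hG'_def]
      calc (p * |v y| ^ (p - 2) * v y) * deriv v y
          = p * (|v y| ^ (p - 2) * v y * deriv v y) := by ring
        _ ≤ p * (|v y| ^ (p - 1) * |deriv v y|) := by
            exact mul_le_mul_of_nonneg_left hkey hp0.le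
    have h2 : y ^ (-α) * G' y ≤ y ^ (-α) * (p * (|v y| ^ (p-1) * |deriv v y|)) :=
      mul_le_mul_of_nonneg_left h1 (Real.rpow_nonneg hy0.le _)
    calc (y ^ (-α) * G' y) / α
        ≤ (y ^ (-α) * (p * (|v y| ^ (p-1) * |deriv v y|))) / α := by
          apply div_le_div_of_nonneg_right h2 hα.le
      _ = (p / α) * (y ^ (-α) * (|v y| ^ (p-1) * |deriv v y|)) := by ring
  have hIlr_le : (∫ y in l..r, y ^ (-((δ + 1) * p)) * |v y| ^ p)
      ≤ (p / α) * ∫ y in l..r, y ^ (-α) * (|v y| ^ (p-1) * |deriv v y|) := by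
    rw [hsplit, ← intervalIntegral.integral_const_mul]
    apply intervalIntegral.integral_mono_on hlr hi_mid (by
      simpa using hi_M.const_mul (p / α)) hbound
  -- relate interval integrals to integrals over Ioi 0
  have hinterval_eq : ∀ f : ℝ → ℝ, (∀ y, y ∉ Set.Ioo l r → f y = 0) →
      (∫ y in Set.Ioi (0:ℝ), f y) = ∫ y in l..r, f y := by
    intro f hf
    rw [intervalIntegral.integral_of_le hlr,
      setIntegral_eq_integral_of_forall_compl_eq_zero (s := Set.Ioc l r)
        (fun y hy => hf y fun h => hy (Set.Ioo_subset_Ioc_self h)),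
      setIntegral_eq_integral_of_forall_compl_eq_zero]
    intro y hy
    apply hf
    intro h
    exact hy (lt_trans hl h.1)
  have hI_eq : (∫ y in Set.Ioi (0:ℝ), y ^ (-((δ + 1) * p)) * |v y| ^ p)
      = ∫ y in l..r, y ^ (-((δ + 1) * p)) * |v y| ^ p := by
    apply hinterval_eq
    intro y hy
    rw [habs0 (hv0 y hy), mul_zero]
  have hM_eq : (∫ y in Set.Ioi (0:ℝ), y ^ (-α) * (|v y| ^ (p-1) * |deriv v y|))
      = ∫ y in l..r, y ^ (-α) * (|v y| ^ (p-1) * |deriv v y|) := by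
    apply hinterval_eq
    intro y hy
    rw [hdv0 y hy, abs_zero, mul_zero, mul_zero]
  set I : ℝ := ∫ y in Set.Ioi (0:ℝ), y ^ (-((δ + 1) * p)) * |v y| ^ p with hI_def
  set J : ℝ := ∫ y in Set.Ioi (0:ℝ), y ^ (-(δ * p)) * |deriv v y| ^ p with hJ_def
  set M : ℝ := ∫ y in Set.Ioi (0:ℝ), y ^ (-α) * (|v y| ^ (p-1) * |deriv v y|) with hM_def
  have hIM : I ≤ (p / α) * M := by
    rw [hI_eq, hM_eq]
    exact hIlr_le
  -- Hölder's inequality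
  set A : ℝ → ℝ := fun y => y ^ (-((δ + 1) * p) / q) * |v y| ^ (p - 1) with hA_def
  set B : ℝ → ℝ := fun y => y ^ ((p - 1 - α) / p) * |deriv v y| with hB_def
  have hApkg := pkg (-((δ + 1) * p) / q) _ (hvc.abs.rpow_const fun y => Or.inr hp1.le) hswv1
  have hBpkg := pkg ((p - 1 - α) / p) _ hdv.abs hswdv
  have hmemA : MemLp A (ENNReal.ofReal q) (volume.restrict (Set.Ioi (0:ℝ))) :=
    (Continuous.memLp_of_hasCompactSupport (p := ENNReal.ofReal q) hApkg.1 hApkg.2).restrict _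
  have hmemB : MemLp B (ENNReal.ofReal p) (volume.restrict (Set.Ioi (0:ℝ))) :=
    (Continuous.memLp_of_hasCompactSupport (p := ENNReal.ofReal p) hBpkg.1 hBpkg.2).restrict _
  have hAnn : 0 ≤ᶠ[ae (volume.restrict (Set.Ioi (0:ℝ)))] A :=
    hnn _ _ fun y => Real.rpow_nonneg (abs_nonneg _) _
  have hBnn : 0 ≤ᶠ[ae (volume.restrict (Set.Ioi (0:ℝ)))] B :=
    hnn _ _ fun y => abs_nonneg _
  have hHold := integral_mul_le_Lp_mul_Lq_of_nonneg hqp hAnn hBnn hmemA hmemB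
  have hsum : -((δ + 1) * p) / q + (p - 1 - α) / p = -α := by
    rw [hα_def, hq_def]
    field_simp
    ring
  have hAB_eq : (∫ y in Set.Ioi (0:ℝ), A y * B y) = M := by
    rw [hM_def]
    apply setIntegral_congr_fun measurableSet_Ioi
    intro y hy
    have hy0 : (0:ℝ) < y := hy
    calc A y * B y
        = y ^ (-((δ + 1) * p) / q) * y ^ ((p - 1 - α) / p) * (|v y| ^ (p - 1) * |deriv v y|) := by
          rw [hA_def, hB_def]; ring
      _ = y ^ (-((δ + 1) * p) / q + (p - 1 - α) / p) * (|v y| ^ (p - 1) * |deriv v y|) := by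
          rw [Real.rpow_add hy0]
      _ = y ^ (-α) * (|v y| ^ (p - 1) * |deriv v y|) := by rw [hsum]
  have hAq_eq : (∫ y in Set.Ioi (0:ℝ), A y ^ q) = I := by
    rw [hI_def]
    apply setIntegral_congr_fun measurableSet_Ioi
    intro y hy
    have hy0 : (0:ℝ) < y := hy
    calc A y ^ q
        = (y ^ (-((δ + 1) * p) / q)) ^ q * (|v y| ^ (p - 1)) ^ q := by
          rw [hA_def]
          exact Real.mul_rpow (Real.rpow_nonneg hy0.le _) (Real.rpow_nonneg (abs_nonneg _) _)
      _ = y ^ (-((δ + 1) * p) / q * q) * |v y| ^ ((p - 1) * q) := by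
          rw [← Real.rpow_mul hy0.le, ← Real.rpow_mul (abs_nonneg _)]
      _ = y ^ (-((δ + 1) * p)) * |v y| ^ p := by
          rw [div_mul_cancel₀ _ hq0.ne', hpq.sub_one_mul_conj]
  have hBp_eq : (∫ y in Set.Ioi (0:ℝ), B y ^ p) = J := by
    rw [hJ_def]
    apply setIntegral_congr_fun measurableSet_Ioi
    intro y hy
    have hy0 : (0:ℝ) < y := hy
    have he2 : (p - 1 - α) / p * p = -(δ * p) := by
      rw [div_mul_cancel₀ _ hp0.ne', hα_def]; ring
    calc B y ^ p
        = (y ^ ((p - 1 - α) / p)) ^ p * |deriv v y| ^ p := by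
          rw [hB_def]
          exact Real.mul_rpow (Real.rpow_nonneg hy0.le _) (abs_nonneg _)
      _ = y ^ ((p - 1 - α) / p * p) * |deriv v y| ^ p := by
          rw [← Real.rpow_mul hy0.le]
      _ = y ^ (-(δ * p)) * |deriv v y| ^ p := by rw [he2]
  rw [hAB_eq, hAq_eq, hBp_eq] at hHold
  -- nonnegativity of I and J
  have hInn : 0 ≤ I := by
    rw [hI_def]
    apply setIntegral_nonneg measurableSet_Ioi
    intro y hy
    exact mul_nonneg (Real.rpow_nonneg (le_of_lt hy) _) (Real.rpow_nonneg (abs_nonneg _) _)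
  have hJnn : 0 ≤ J := by
    rw [hJ_def]
    apply setIntegral_nonneg measurableSet_Ioi
    intro y hy
    exact mul_nonneg (Real.rpow_nonneg (le_of_lt hy) _) (Real.rpow_nonneg (abs_nonneg _) _)
  have hCnn : (0:ℝ) ≤ p / α := by positivity
  -- the main real inequality
  have hmain : I ≤ (p / α) ^ p * J := by
    rcases le_or_gt I 0 with hI0 | hI0
    · exact hI0.trans (mul_nonneg (Real.rpow_nonneg hCnn p) hJnn)
    · have h1 : I ≤ (p / α) * (I ^ (1/q) * J ^ (1/p)) :=
        hIM.trans (mul_le_mul_of_nonneg_left hHold hCnn)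
      have hone : 1/q + 1/p = 1 := by
        rw [one_div, one_div]; exact hqp.inv_add_inv_eq_one
      have hIsplit : I = I ^ (1/q) * I ^ (1/p) := by
        rw [← Real.rpow_add hI0, hone, Real.rpow_one]
      have h2 : I ^ (1/q) * I ^ (1/p) ≤ I ^ (1/q) * ((p / α) * J ^ (1/p)) := by
        calc I ^ (1/q) * I ^ (1/p) = I := hIsplit.symm
          _ ≤ (p / α) * (I ^ (1/q) * J ^ (1/p)) := h1
          _ = I ^ (1/q) * ((p / α) * J ^ (1/p)) := by ring
      have h3 : I ^ (1/p) ≤ (p / α) * J ^ (1/p) :=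
        le_of_mul_le_mul_left h2 (Real.rpow_pos_of_pos hI0 (1/q))
      calc I = (I ^ (1/p)) ^ p := by
            rw [← Real.rpow_mul hI0.le, one_div_mul_cancel hp0.ne', Real.rpow_one]
        _ ≤ ((p / α) * J ^ (1/p)) ^ p :=
            Real.rpow_le_rpow (Real.rpow_nonneg hI0.le _) h3 hp0.le
        _ = (p / α) ^ p * (J ^ (1/p)) ^ p :=
            Real.mul_rpow hCnn (Real.rpow_nonneg hJnn _)
        _ = (p / α) ^ p * J := by
            rw [← Real.rpow_mul hJnn, one_div_mul_cancel hp0.ne', Real.rpow_one]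
  -- convert to lintegrals
  have hint1 : Integrable (fun y : ℝ => y ^ (-((δ + 1) * p)) * |v y| ^ p)
      (volume.restrict (Set.Ioi (0:ℝ))) := by
    have hpk := pkg (-((δ + 1) * p)) _ (hvc.abs.rpow_const fun y => Or.inr hp0.le) hswv
    exact (hpk.1.integrable_of_hasCompactSupport hpk.2).restrict
  have hint2 : Integrable (fun y : ℝ => y ^ (-(δ * p)) * |deriv v y| ^ p)
      (volume.restrict (Set.Ioi (0:ℝ))) := by
    have hpk := pkg (-(δ * p)) _ (hdv.abs.rpow_const fun y => Or.inr hp0.le) hswd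
    exact (hpk.1.integrable_of_hasCompactSupport hpk.2).restrict
  rw [← ofReal_integral_eq_lintegral_ofReal hint1
      (hnn _ _ fun y => Real.rpow_nonneg (abs_nonneg _) _),
    ← ofReal_integral_eq_lintegral_ofReal hint2
      (hnn _ _ fun y => Real.rpow_nonneg (abs_nonneg _) _),
    ← ENNReal.ofReal_mul (Real.rpow_nonneg hCnn p)]
  exact ENNReal.ofReal_le_ofReal hmain

/-- **Weighted Hardy inequality on the half-space** for smooth functions compactly
supported in the open upper half-space `ℝ^{n-1} × (0,∞)`:
`∫ y^{-(δ+1)p} |u|^p ≤ (p/((δ+1)p-1))^p ∫ y^{-δp} |∂_y u|^p`. -/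
theorem weighted_hardy_halfspace_smooth (n : ℕ) (hn : 1 ≤ n) (p δ : ℝ)
    (hp : 1 < p) (hδ : 0 ≤ δ)
    (u : EuclideanSpace ℝ (Fin (n - 1)) × ℝ → ℝ)
    (hu : ContDiff ℝ (⊤ : ℕ∞) u) (hcs : HasCompactSupport u)
    (hsupp : tsupport u ⊆ {z : EuclideanSpace ℝ (Fin (n - 1)) × ℝ | 0 < z.2}) :
    ∫⁻ z in {z : EuclideanSpace ℝ (Fin (n - 1)) × ℝ | 0 < z.2},
        ENNReal.ofReal (z.2 ^ (-((δ + 1) * p)) * |u z| ^ p) ∂volume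
      ≤ ENNReal.ofReal ((p / ((δ + 1) * p - 1)) ^ p) *
        ∫⁻ z in {z : EuclideanSpace ℝ (Fin (n - 1)) × ℝ | 0 < z.2},
          ENNReal.ofReal (z.2 ^ (-(δ * p)) *
            |fderiv ℝ u z ((0 : EuclideanSpace ℝ (Fin (n - 1))), (1 : ℝ))| ^ p) ∂volume := by
  have hp0 : (0:ℝ) < p := lt_trans one_pos hp
  have hdiff : Differentiable ℝ u := hu.differentiable (by simp)
  have hucont : Continuous u := hu.continuous
  have hfcont : Continuous fun z : (EuclideanSpace ℝ (Fin (n - 1))) × ℝ => (fderiv ℝ u z) ((0 : (EuclideanSpace ℝ (Fin (n - 1)))), (1 : ℝ)) :=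
    (hu.continuous_fderiv (by simp)).clm_apply continuous_const
  -- continuity of the two integrands
  have hsw1 : Function.support (fun z : (EuclideanSpace ℝ (Fin (n - 1))) × ℝ => |u z| ^ p) ⊆ tsupport u := by
    intro z hz
    apply subset_tsupport u
    simp only [Function.mem_support] at hz ⊢
    intro h; apply hz; rw [h, abs_zero, Real.zero_rpow hp0.ne']
  have hsw2 : Function.support
      (fun z : (EuclideanSpace ℝ (Fin (n - 1))) × ℝ => |(fderiv ℝ u z) ((0 : (EuclideanSpace ℝ (Fin (n - 1)))), (1 : ℝ))| ^ p) ⊆ tsupport u := by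
    intro z hz
    simp only [Function.mem_support] at hz
    have hz' : fderiv ℝ u z ≠ 0 := by
      intro h; apply hz; rw [h]; simp [Real.zero_rpow hp0.ne']
    exact support_fderiv_subset ℝ (Function.mem_support.mpr hz')
  have hpos : ∀ z ∈ tsupport u, (0:ℝ) < z.2 := fun z hz => hsupp hz
  have hcont1 : Continuous fun z : (EuclideanSpace ℝ (Fin (n - 1))) × ℝ => z.2 ^ (-((δ + 1) * p)) * |u z| ^ p :=
    cont_rpow_mul continuous_snd (hucont.abs.rpow_const fun z => Or.inr hp0.le)
      (isClosed_tsupport u) hsw1 hpos _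
  have hcont2 : Continuous fun z : (EuclideanSpace ℝ (Fin (n - 1))) × ℝ =>
      z.2 ^ (-(δ * p)) * |(fderiv ℝ u z) ((0 : (EuclideanSpace ℝ (Fin (n - 1)))), (1 : ℝ))| ^ p :=
    cont_rpow_mul continuous_snd (hfcont.abs.rpow_const fun z => Or.inr hp0.le)
      (isClosed_tsupport u) hsw2 hpos _
  -- rewrite the domain and the measure
  have hset : {z : (EuclideanSpace ℝ (Fin (n - 1))) × ℝ | 0 < z.2} = (Set.univ : Set (EuclideanSpace ℝ (Fin (n - 1)))) ×ˢ Set.Ioi (0:ℝ) := by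
    ext z; simp [Set.mem_prod]
  have hres : (volume : Measure ((EuclideanSpace ℝ (Fin (n - 1))) × ℝ)).restrict {z : (EuclideanSpace ℝ (Fin (n - 1))) × ℝ | 0 < z.2}
      = (volume : Measure (EuclideanSpace ℝ (Fin (n - 1)))).prod ((volume : Measure ℝ).restrict (Set.Ioi 0)) := by
    rw [hset, show (volume : Measure ((EuclideanSpace ℝ (Fin (n - 1))) × ℝ)) = (volume : Measure (EuclideanSpace ℝ (Fin (n - 1)))).prod (volume : Measure ℝ)
      from rfl, ← Measure.prod_restrict, Measure.restrict_univ]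
  rw [hres,
    lintegral_prod _ (hcont1.measurable.ennreal_ofReal.aemeasurable),
    lintegral_prod _ (hcont2.measurable.ennreal_ofReal.aemeasurable)]
  calc ∫⁻ x : (EuclideanSpace ℝ (Fin (n - 1))), ∫⁻ y in Set.Ioi (0:ℝ),
        ENNReal.ofReal ((x, y).2 ^ (-((δ + 1) * p)) * |u (x, y)| ^ p) ∂volume
      ≤ ∫⁻ x : (EuclideanSpace ℝ (Fin (n - 1))), ENNReal.ofReal ((p / ((δ + 1) * p - 1)) ^ p) *
          ∫⁻ y in Set.Ioi (0:ℝ), ENNReal.ofReal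
            ((x, y).2 ^ (-(δ * p)) * |(fderiv ℝ u (x, y)) ((0 : (EuclideanSpace ℝ (Fin (n - 1)))), (1 : ℝ))| ^ p) ∂volume := by
        apply lintegral_mono
        intro x
        set v : ℝ → ℝ := fun y => u (x, y) with hv_def
        have hvC : ContDiff ℝ (⊤ : ℕ∞) v := hu.comp (contDiff_const.prodMk contDiff_id)
        have hK2 : IsCompact (Prod.snd '' tsupport u) := hcs.image continuous_snd
        have hsubv : Function.support v ⊆ Prod.snd '' tsupport u := by
          intro y hy
          exact ⟨(x, y), subset_tsupport u (Function.mem_support.mpr hy), rfl⟩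
        have htsv : tsupport v ⊆ Prod.snd '' tsupport u :=
          closure_minimal hsubv hK2.isClosed
        have hvcs : HasCompactSupport v :=
          IsCompact.of_isClosed_subset hK2 (isClosed_tsupport v) htsv
        have hvsupp : tsupport v ⊆ Set.Ioi 0 := by
          refine htsv.trans ?_
          rintro y ⟨z, hz, rfl⟩
          exact hsupp hz
        have hderiv : ∀ y : ℝ, deriv v y = (fderiv ℝ u (x, y)) ((0 : (EuclideanSpace ℝ (Fin (n - 1)))), (1 : ℝ)) := by
          intro y
          have hdi : HasDerivAt (fun t : ℝ => ((x, t) : (EuclideanSpace ℝ (Fin (n - 1))) × ℝ)) ((0 : (EuclideanSpace ℝ (Fin (n - 1)))), (1 : ℝ)) y :=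
            (hasDerivAt_const y x).prodMk (hasDerivAt_id y)
          exact ((hdiff (x, y)).hasFDerivAt.comp_hasDerivAt y hdi).deriv
        have h1d := hardy_oneDim p δ hp hδ v hvC hvcs hvsupp
        calc (∫⁻ y in Set.Ioi (0:ℝ),
              ENNReal.ofReal ((x, y).2 ^ (-((δ + 1) * p)) * |u (x, y)| ^ p) ∂volume)
            = ∫⁻ y in Set.Ioi (0:ℝ),
              ENNReal.ofReal (y ^ (-((δ + 1) * p)) * |v y| ^ p) ∂volume := rfl
          _ ≤ ENNReal.ofReal ((p / ((δ + 1) * p - 1)) ^ p) *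
              ∫⁻ y in Set.Ioi (0:ℝ),
                ENNReal.ofReal (y ^ (-(δ * p)) * |deriv v y| ^ p) ∂volume := h1d
          _ = ENNReal.ofReal ((p / ((δ + 1) * p - 1)) ^ p) *
              ∫⁻ y in Set.Ioi (0:ℝ), ENNReal.ofReal
                ((x, y).2 ^ (-(δ * p)) * |(fderiv ℝ u (x, y)) ((0 : (EuclideanSpace ℝ (Fin (n - 1)))), (1 : ℝ))| ^ p) ∂volume := by
              congr 1
              apply lintegral_congr
              intro y
              rw [hderiv y]
    _ = ENNReal.ofReal ((p / ((δ + 1) * p - 1)) ^ p) *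
          ∫⁻ x : (EuclideanSpace ℝ (Fin (n - 1))), ∫⁻ y in Set.Ioi (0:ℝ), ENNReal.ofReal
            ((x, y).2 ^ (-(δ * p)) * |(fderiv ℝ u (x, y)) ((0 : (EuclideanSpace ℝ (Fin (n - 1)))), (1 : ℝ))| ^ p) ∂volume := by
        rw [lintegral_const_mul' _ _ ENNReal.ofReal_ne_top]
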